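/- If x_ε is an ε-approximate unconstrained minimizer of f_reg(x) := f(x) + 2L · max(0, ‖x − c‖ − r) (i.e., f_reg(x_ε) ≤ inf_x f_reg(x) + ε), then the point z, defined as x_ε if ‖x_ε − c‖ ≤ r and as c + (r/‖x_ε − c‖)(x_ε − c) otherwise, satisfies ‖z − c‖ ≤ r and f(z) ≤ min over {x : ‖x − c‖ ≤ r} of f(x) + ε. -/

import Mathlib

/-- reduction from constrained to unconstrained optimization: an
`ε`-approximate unconstrained minimizer of the regularized function, projected radially
onto the ball if necessary, is an `ε`-approximate constrained minimizer of `f`. -/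
theorem stmt_4 {E : Type*} [NormedAddCommGroup E] [NormedSpace ℝ E]
    (f : E → ℝ) (L : ℝ) (hL : 0 < L)
    (hconv : ConvexOn ℝ Set.univ f)
    (hlip : ∀ x y : E, |f x - f y| ≤ L * ‖x - y‖)
    (c : E) (r : ℝ) (hr : 0 < r) (ε : ℝ) (hε : 0 ≤ ε)
    (freg : E → ℝ)
    (hfreg : ∀ x : E, freg x = f x + 2 * L * max 0 (‖x - c‖ - r))
    (xε : E) (hxε : ∀ x : E, freg xε ≤ freg x + ε)
    (z : E)
    (hz : z = if ‖xε - c‖ ≤ r then xε else c + (r / ‖xε - c‖) • (xε - c)) :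
    ‖z - c‖ ≤ r ∧ ∀ x : E, ‖x - c‖ ≤ r → f z ≤ f x + ε := by
  subst hz
  by_cases h : ‖xε - c‖ ≤ r
  · rw [if_pos h]
    refine ⟨h, fun x hx => ?_⟩
    have h1 := hxε x
    rw [hfreg xε, hfreg x] at h1
    have e1 : max 0 (‖xε - c‖ - r) = 0 := max_eq_left (by linarith)
    have e2 : max 0 (‖x - c‖ - r) = 0 := max_eq_left (by linarith)
    rw [e1, e2] at h1
    linarith
  · push_neg at h
    have hd0 : 0 < ‖xε - c‖ := lt_trans hr h
    rw [if_neg (not_le.mpr h)]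
    have hzc : (c + (r / ‖xε - c‖) • (xε - c)) - c = (r / ‖xε - c‖) • (xε - c) := by abel
    have hnzc : ‖(c + (r / ‖xε - c‖) • (xε - c)) - c‖ = r := by
      rw [hzc, norm_smul, Real.norm_eq_abs, abs_of_pos (div_pos hr hd0)]
      field_simp
    refine ⟨le_of_eq hnzc, fun x hx => ?_⟩
    have hzx : (c + (r / ‖xε - c‖) • (xε - c)) - xε = (r / ‖xε - c‖ - 1) • (xε - c) := by
      rw [sub_smul, one_smul]; abel
    have hnzx : ‖(c + (r / ‖xε - c‖) • (xε - c)) - xε‖ = ‖xε - c‖ - r := by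
      rw [hzx, norm_smul, Real.norm_eq_abs,
        abs_of_nonpos (by rw [sub_nonpos, div_le_one hd0]; exact le_of_lt h)]
      field_simp
      ring
    have hlz := hlip (c + (r / ‖xε - c‖) • (xε - c)) xε
    rw [hnzx] at hlz
    have hfz : f (c + (r / ‖xε - c‖) • (xε - c)) ≤ f xε + L * (‖xε - c‖ - r) :=
      by have := abs_le.mp hlz; linarith [this.2]
    have h1 := hxε x
    rw [hfreg xε, hfreg x] at h1
    have e1 : max 0 (‖xε - c‖ - r) = ‖xε - c‖ - r := max_eq_right (by linarith)
    have e2 : max 0 (‖x - c‖ - r) = 0 := max_eq_left (by linarith)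
    rw [e1, e2] at h1
    nlinarith [mul_nonneg hL.le (by linarith : (0:ℝ) ≤ ‖xε - c‖ - r)]
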